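/- Let H₀ be a bounded self-adjoint operator on ℓ²(ℤᵈ), Λ ⊆ ℤᵈ, V^Λ a bounded self-adjoint operator on ℓ²(Λ), V = Π*V^ΛΠ and H = H₀ + V. Let E be a real number not in the spectrum of H₀ and set G₀^Λ(E) = Π(E − H₀)⁻¹Π*. Then the map ψ ↦ Πψ restricts to a linear bijection from the eigenspace ker(H − E) in ℓ²(ℤᵈ) onto ker(1 − G₀^Λ(E)V^Λ) in ℓ²(Λ); in particular, E is an eigenvalue of H if and only if ker(1 − G₀^Λ(E)V^Λ) ≠ {0}, and its geometric multiplicity equals the dimension of that kernel. -/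

import Mathlib

set_option maxHeartbeats 1000000


noncomputable section

open ContinuousLinearMap

/-- For `H = H₀ + Φ* VΛ Φ` and a real `E` outside the spectrum of `H₀`,
the restriction map `Φ` restricts to a linear bijection from the eigenspace `ker(H - E)`
onto `ker(1 - G₀^Λ(E) VΛ)`; in particular `E` is an eigenvalue of `H` iff this kernel is
nonzero, and the geometric multiplicity equals its dimension. -/
theorem stmt4 (d : ℕ) (Λ : Set (Fin d → ℤ))
    (H₀ : lp (fun _ : Fin d → ℤ => ℂ) 2 →L[ℂ] lp (fun _ : Fin d → ℤ => ℂ) 2)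
    (hH₀ : IsSelfAdjoint H₀)
    (Φ : lp (fun _ : Fin d → ℤ => ℂ) 2 →L[ℂ] lp (fun _ : Λ => ℂ) 2)
    (hΦ : ∀ (f : lp (fun _ : Fin d → ℤ => ℂ) 2) (n : Λ), (Φ f) n = f n)
    (hΦcoiso : Φ ∘L ContinuousLinearMap.adjoint Φ = 1)
    (VΛ : lp (fun _ : Λ => ℂ) 2 →L[ℂ] lp (fun _ : Λ => ℂ) 2)
    (hVΛ : IsSelfAdjoint VΛ)
    (E : ℝ) (hE : (E : ℂ) ∉ spectrum ℂ H₀) :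
    ∀ H G₀Λ,
      H = H₀ + (ContinuousLinearMap.adjoint Φ) ∘L VΛ ∘L Φ →
      G₀Λ = Φ ∘L Ring.inverse ((E : ℂ) • 1 - H₀) ∘L ContinuousLinearMap.adjoint Φ →
      Set.BijOn (fun ψ => Φ ψ)
        (LinearMap.ker (((H - (E : ℂ) • 1 : lp (fun _ : Fin d → ℤ => ℂ) 2 →L[ℂ] lp (fun _ : Fin d → ℤ => ℂ) 2)) : lp (fun _ : Fin d → ℤ => ℂ) 2 →ₗ[ℂ] lp (fun _ : Fin d → ℤ => ℂ) 2) : Set (lp (fun _ : Fin d → ℤ => ℂ) 2))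
        (LinearMap.ker (((1 - G₀Λ * VΛ : lp (fun _ : Λ => ℂ) 2 →L[ℂ] lp (fun _ : Λ => ℂ) 2)) : lp (fun _ : Λ => ℂ) 2 →ₗ[ℂ] lp (fun _ : Λ => ℂ) 2) : Set (lp (fun _ : Λ => ℂ) 2)) ∧
      ((∃ ψ : lp (fun _ : Fin d → ℤ => ℂ) 2, ψ ≠ 0 ∧ H ψ = (E : ℂ) • ψ) ↔
        LinearMap.ker (((1 - G₀Λ * VΛ : lp (fun _ : Λ => ℂ) 2 →L[ℂ] lp (fun _ : Λ => ℂ) 2)) : lp (fun _ : Λ => ℂ) 2 →ₗ[ℂ] lp (fun _ : Λ => ℂ) 2) ≠ ⊥) ∧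
      Module.rank ℂ (LinearMap.ker (((H - (E : ℂ) • 1 : lp (fun _ : Fin d → ℤ => ℂ) 2 →L[ℂ] lp (fun _ : Fin d → ℤ => ℂ) 2)) : lp (fun _ : Fin d → ℤ => ℂ) 2 →ₗ[ℂ] lp (fun _ : Fin d → ℤ => ℂ) 2)) =
        Module.rank ℂ (LinearMap.ker (((1 - G₀Λ * VΛ : lp (fun _ : Λ => ℂ) 2 →L[ℂ] lp (fun _ : Λ => ℂ) 2)) : lp (fun _ : Λ => ℂ) 2 →ₗ[ℂ] lp (fun _ : Λ => ℂ) 2)) := by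
  intro H G₀Λ hH hG
  have hU : IsUnit ((E : ℂ) • (1 : lp (fun _ : Fin d → ℤ => ℂ) 2 →L[ℂ]
      lp (fun _ : Fin d → ℤ => ℂ) 2) - H₀) := by
    have h := spectrum.notMem_iff.mp hE
    rwa [Algebra.algebraMap_eq_smul_one] at h
  set U := (E : ℂ) • (1 : lp (fun _ : Fin d → ℤ => ℂ) 2 →L[ℂ]
      lp (fun _ : Fin d → ℤ => ℂ) 2) - H₀ with hUdef
  set R := Ring.inverse U with hRdef
  have hRU : ∀ ψ, R (U ψ) = ψ := fun ψ => by
    have h : (R * U) ψ = (1 : lp (fun _ : Fin d → ℤ => ℂ) 2 →L[ℂ]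
        lp (fun _ : Fin d → ℤ => ℂ) 2) ψ := by rw [Ring.inverse_mul_cancel _ hU]
    simpa [mul_apply] using h
  have hUR : ∀ ψ, U (R ψ) = ψ := fun ψ => by
    have h : (U * R) ψ = (1 : lp (fun _ : Fin d → ℤ => ℂ) 2 →L[ℂ]
        lp (fun _ : Fin d → ℤ => ℂ) 2) ψ := by rw [Ring.mul_inverse_cancel _ hU]
    simpa [mul_apply] using h
  have hop : H - (E : ℂ) • 1 = ((ContinuousLinearMap.adjoint Φ) ∘L VΛ ∘L Φ) - U := by
    rw [hH, hUdef]; abel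
  have hker : ∀ ψ, ψ ∈ LinearMap.ker ((H - (E : ℂ) • 1 : lp (fun _ : Fin d → ℤ => ℂ) 2 →L[ℂ] lp (fun _ : Fin d → ℤ => ℂ) 2) : lp (fun _ : Fin d → ℤ => ℂ) 2 →ₗ[ℂ] lp (fun _ : Fin d → ℤ => ℂ) 2) ↔
      ψ = R ((ContinuousLinearMap.adjoint Φ) (VΛ (Φ ψ))) := by
    intro ψ
    rw [LinearMap.mem_ker, ContinuousLinearMap.coe_coe, hop, sub_apply, sub_eq_zero]
    constructor
    · intro h
      calc ψ = R (U ψ) := (hRU ψ).symm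
        _ = _ := by rw [← h]; simp [comp_apply]
    · intro h
      have : U ψ = (ContinuousLinearMap.adjoint Φ) (VΛ (Φ ψ)) := by
        conv_lhs => rw [h]
        rw [hUR]
      simp [comp_apply, this]
  have hGapp : ∀ φ, G₀Λ φ = Φ (R ((ContinuousLinearMap.adjoint Φ) φ)) := by
    intro φ; rw [hG]; simp [comp_apply]
  have hker' : ∀ φ, φ ∈ LinearMap.ker ((1 - G₀Λ * VΛ : lp (fun _ : Λ => ℂ) 2 →L[ℂ] lp (fun _ : Λ => ℂ) 2) : lp (fun _ : Λ => ℂ) 2 →ₗ[ℂ] lp (fun _ : Λ => ℂ) 2) ↔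
      φ = Φ (R ((ContinuousLinearMap.adjoint Φ) (VΛ φ))) := by
    intro φ
    rw [LinearMap.mem_ker, ContinuousLinearMap.coe_coe, sub_apply, ContinuousLinearMap.one_apply, ContinuousLinearMap.mul_apply,
      sub_eq_zero, hGapp]
  have hmapsTo : ∀ ψ ∈ (LinearMap.ker ((H - (E : ℂ) • 1 : lp (fun _ : Fin d → ℤ => ℂ) 2 →L[ℂ] lp (fun _ : Fin d → ℤ => ℂ) 2) : lp (fun _ : Fin d → ℤ => ℂ) 2 →ₗ[ℂ] lp (fun _ : Fin d → ℤ => ℂ) 2) :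
      Set (lp (fun _ : Fin d → ℤ => ℂ) 2)), Φ ψ ∈ LinearMap.ker ((1 - G₀Λ * VΛ : lp (fun _ : Λ => ℂ) 2 →L[ℂ] lp (fun _ : Λ => ℂ) 2) : lp (fun _ : Λ => ℂ) 2 →ₗ[ℂ] lp (fun _ : Λ => ℂ) 2) := by
    intro ψ hψ
    rw [SetLike.mem_coe, hker] at hψ
    rw [hker']
    conv_lhs => rw [hψ]
  have hinjOn : ∀ ψ₁ ∈ (LinearMap.ker ((H - (E : ℂ) • 1 : lp (fun _ : Fin d → ℤ => ℂ) 2 →L[ℂ] lp (fun _ : Fin d → ℤ => ℂ) 2) : lp (fun _ : Fin d → ℤ => ℂ) 2 →ₗ[ℂ] lp (fun _ : Fin d → ℤ => ℂ) 2) :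
      Set (lp (fun _ : Fin d → ℤ => ℂ) 2)), ∀ ψ₂ ∈ (LinearMap.ker ((H - (E : ℂ) • 1 : lp (fun _ : Fin d → ℤ => ℂ) 2 →L[ℂ] lp (fun _ : Fin d → ℤ => ℂ) 2) : lp (fun _ : Fin d → ℤ => ℂ) 2 →ₗ[ℂ] lp (fun _ : Fin d → ℤ => ℂ) 2) :
      Set (lp (fun _ : Fin d → ℤ => ℂ) 2)), Φ ψ₁ = Φ ψ₂ → ψ₁ = ψ₂ := by
    intro ψ₁ h₁ ψ₂ h₂ h
    rw [SetLike.mem_coe, hker] at h₁ h₂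
    rw [h₁, h₂, h]
  have hsurjOn : ∀ φ ∈ (LinearMap.ker ((1 - G₀Λ * VΛ : lp (fun _ : Λ => ℂ) 2 →L[ℂ] lp (fun _ : Λ => ℂ) 2) : lp (fun _ : Λ => ℂ) 2 →ₗ[ℂ] lp (fun _ : Λ => ℂ) 2) : Set (lp (fun _ : Λ => ℂ) 2)),
      ∃ ψ ∈ (LinearMap.ker ((H - (E : ℂ) • 1 : lp (fun _ : Fin d → ℤ => ℂ) 2 →L[ℂ] lp (fun _ : Fin d → ℤ => ℂ) 2) : lp (fun _ : Fin d → ℤ => ℂ) 2 →ₗ[ℂ] lp (fun _ : Fin d → ℤ => ℂ) 2) : Set (lp (fun _ : Fin d → ℤ => ℂ) 2)),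
        Φ ψ = φ := by
    intro φ hφ
    rw [SetLike.mem_coe, hker'] at hφ
    refine ⟨R ((ContinuousLinearMap.adjoint Φ) (VΛ φ)), ?_, hφ.symm⟩
    rw [SetLike.mem_coe, hker]
    conv_rhs => rw [← hφ]
  have hbij : Set.BijOn (fun ψ => Φ ψ)
      (LinearMap.ker ((H - (E : ℂ) • 1 : lp (fun _ : Fin d → ℤ => ℂ) 2 →L[ℂ] lp (fun _ : Fin d → ℤ => ℂ) 2) : lp (fun _ : Fin d → ℤ => ℂ) 2 →ₗ[ℂ] lp (fun _ : Fin d → ℤ => ℂ) 2) : Set (lp (fun _ : Fin d → ℤ => ℂ) 2))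
      (LinearMap.ker ((1 - G₀Λ * VΛ : lp (fun _ : Λ => ℂ) 2 →L[ℂ] lp (fun _ : Λ => ℂ) 2) : lp (fun _ : Λ => ℂ) 2 →ₗ[ℂ] lp (fun _ : Λ => ℂ) 2) : Set (lp (fun _ : Λ => ℂ) 2)) := by
    refine ⟨hmapsTo, hinjOn, ?_⟩
    intro φ hφ
    obtain ⟨ψ, hψ, hΦψ⟩ := hsurjOn φ hφ
    exact ⟨ψ, hψ, hΦψ⟩
  refine ⟨hbij, ?_, ?_⟩
  · constructor
    · rintro ⟨ψ, hψ0, hψE⟩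
      have hψ : ψ ∈ LinearMap.ker ((H - (E : ℂ) • 1 : lp (fun _ : Fin d → ℤ => ℂ) 2 →L[ℂ] lp (fun _ : Fin d → ℤ => ℂ) 2) : lp (fun _ : Fin d → ℤ => ℂ) 2 →ₗ[ℂ] lp (fun _ : Fin d → ℤ => ℂ) 2) := by
        rw [LinearMap.mem_ker, ContinuousLinearMap.coe_coe, sub_apply, smul_apply, ContinuousLinearMap.one_apply,
          hψE, sub_self]
      rw [Submodule.ne_bot_iff]
      refine ⟨Φ ψ, hmapsTo ψ hψ, ?_⟩
      intro h0
      apply hψ0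
      have h0' : Φ ψ = Φ (0 : lp (fun _ : Fin d → ℤ => ℂ) 2) := by simp [h0]
      exact hinjOn ψ hψ 0 (by simp) h0'
    · intro h
      rw [Submodule.ne_bot_iff] at h
      obtain ⟨φ, hφ, hφ0⟩ := h
      obtain ⟨ψ, hψ, hΦψ⟩ := hsurjOn φ hφ
      refine ⟨ψ, ?_, ?_⟩
      · intro h0; apply hφ0; rw [← hΦψ, h0]; simp
      · rw [SetLike.mem_coe, LinearMap.mem_ker, ContinuousLinearMap.coe_coe, sub_apply,
          smul_apply, ContinuousLinearMap.one_apply, sub_eq_zero] at hψ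
        exact hψ
  · let e : LinearMap.ker ((H - (E : ℂ) • 1 : lp (fun _ : Fin d → ℤ => ℂ) 2 →L[ℂ] lp (fun _ : Fin d → ℤ => ℂ) 2) : lp (fun _ : Fin d → ℤ => ℂ) 2 →ₗ[ℂ] lp (fun _ : Fin d → ℤ => ℂ) 2) →ₗ[ℂ] LinearMap.ker ((1 - G₀Λ * VΛ : lp (fun _ : Λ => ℂ) 2 →L[ℂ] lp (fun _ : Λ => ℂ) 2) : lp (fun _ : Λ => ℂ) 2 →ₗ[ℂ] lp (fun _ : Λ => ℂ) 2) :=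
      { toFun := fun x => ⟨Φ x, hmapsTo x x.2⟩
        map_add' := fun x y => by ext1; simp; rfl
        map_smul' := fun c x => by ext1; simp; rfl }
    have hinj : Function.Injective e := by
      intro x y hxy
      exact Subtype.ext (hinjOn x x.2 y y.2 (congrArg Subtype.val hxy))
    have hsurj : Function.Surjective e := by
      intro y
      obtain ⟨ψ, hψ, hΦψ⟩ := hsurjOn y y.2
      exact ⟨⟨ψ, hψ⟩, Subtype.ext hΦψ⟩
    exact (LinearEquiv.ofBijective e ⟨hinj, hsurj⟩).rank_eq
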